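/- Let u ≡ z (mod r) with 0 <= z < r. Then there exists a partial r-spread of F_q^u of size at least (q^u - q^r(q^z - 1) - 1)/(q^r - 1). -/

import Mathlib

open Module Polynomial


lemma exists_finite_ext (F : Type*) [Field F] [Fintype F] (m : ℕ) (hm : m ≠ 0) :
    ∃ (L : Type) (_ : Field L) (_ : Algebra F L) (_ : Fintype L),
      Module.finrank F L = m ∧ Fintype.card L = Fintype.card F ^ m := by
  obtain ⟨p, hchar⟩ := CharP.exists F
  haveI := hchar
  obtain ⟨n, hp, hcard⟩ := FiniteField.card F p
  haveI : Fact p.Prime := ⟨hp⟩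
  letI : Algebra (ZMod p) F := ZMod.algebra F p
  set L := GaloisField p (n * m) with hL
  have hnm : (n : ℕ) * m ≠ 0 := by
    have := n.pos; positivity
  have hdvd1 : p ^ (n : ℕ) - 1 ∣ p ^ ((n : ℕ) * m) - 1 := by
    have := Nat.sub_dvd_pow_sub_pow (p ^ (n : ℕ)) 1 m
    simpa [← pow_mul] using this
  have hpow_pos : 0 < p ^ (n : ℕ) := pow_pos hp.pos _
  have hpow_pos2 : 0 < p ^ ((n : ℕ) * m) := pow_pos hp.pos _
  have hXdvd : ∀ s t : ℕ, s ∣ t → (X ^ s - 1 : (ZMod p)[X]) ∣ X ^ t - 1 := by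
    rintro s t ⟨c, rfl⟩
    simpa [pow_mul, one_pow] using sub_dvd_pow_sub_pow (X ^ s : (ZMod p)[X]) 1 c
  have hdvd : (X ^ Fintype.card F - X : (ZMod p)[X]) ∣ X ^ p ^ ((n : ℕ) * m) - X := by
    rw [hcard]
    have e1 : (X ^ p ^ (n : ℕ) - X : (ZMod p)[X]) = X * (X ^ (p ^ (n : ℕ) - 1) - 1) := by
      have h : p ^ (n : ℕ) - 1 + 1 = p ^ (n : ℕ) := Nat.succ_pred_eq_of_pos hpow_pos
      rw [mul_sub, mul_one, ← pow_succ', h]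
    have e2 : (X ^ p ^ ((n : ℕ) * m) - X : (ZMod p)[X]) =
        X * (X ^ (p ^ ((n : ℕ) * m) - 1) - 1) := by
      have h : p ^ ((n : ℕ) * m) - 1 + 1 = p ^ ((n : ℕ) * m) := Nat.succ_pred_eq_of_pos hpow_pos2
      rw [mul_sub, mul_one, ← pow_succ', h]
    rw [e1, e2]
    exact mul_dvd_mul_left _ (hXdvd _ _ hdvd1)
  have hsplitsBig : Splits ((X ^ p ^ ((n : ℕ) * m) - X : (ZMod p)[X]).map (algebraMap (ZMod p) L)) :=
    haveI : IsSplittingField (ZMod p) L (X ^ p ^ ((n : ℕ) * m) - X) :=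
      FiniteField.isSplittingField_of_nat_card_eq (p := p) (n := (n : ℕ) * m) (K := L)
        (GaloisField.card p ((n : ℕ) * m) hnm)
    IsSplittingField.splits L _
  have hbigne : (X ^ p ^ ((n : ℕ) * m) - X : (ZMod p)[X]) ≠ 0 :=
    FiniteField.X_pow_card_sub_X_ne_zero (K' := ZMod p)
      (lt_of_lt_of_le hp.one_lt (Nat.le_self_pow hnm p))
  have hsplits : Splits ((X ^ Fintype.card F - X : (ZMod p)[X]).map (algebraMap (ZMod p) L)) :=
    hsplitsBig.of_dvd (Polynomial.map_ne_zero hbigne) (Polynomial.map_dvd _ hdvd)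
  haveI := FiniteField.isSplittingField_sub F (ZMod p)
  let emb : F →ₐ[ZMod p] L := IsSplittingField.lift F (X ^ Fintype.card F - X) hsplits
  letI : Algebra F L := emb.toRingHom.toAlgebra
  haveI : IsScalarTower (ZMod p) F L :=
    IsScalarTower.of_algebraMap_eq (fun x => (emb.commutes x).symm)
  letI : Fintype L := Fintype.ofFinite L
  have hrk1 : finrank (ZMod p) F = (n : ℕ) := by
    have h1 : Fintype.card F = Fintype.card (ZMod p) ^ finrank (ZMod p) F :=
      card_eq_pow_finrank
    rw [ZMod.card, hcard] at h1
    exact (Nat.pow_right_injective hp.two_le h1.symm)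
  have hrk2 : finrank (ZMod p) L = (n : ℕ) * m := GaloisField.finrank p hnm
  have htower : finrank (ZMod p) F * finrank F L = finrank (ZMod p) L :=
    finrank_mul_finrank _ _ _
  have hrk : finrank F L = m := by
    rw [hrk1, hrk2] at htower
    exact Nat.eq_of_mul_eq_mul_left n.pos htower
  have hcardL : Fintype.card L = Fintype.card F ^ m := by
    have := GaloisField.card p ((n : ℕ) * m) hnm
    rw [Nat.card_eq_fintype_card] at this
    rw [this, hcard, ← pow_mul]
  exact ⟨L, inferInstance, inferInstance, inferInstance, hrk, hcardL⟩

lemma exists_mrd (F : Type*) [Field F] [Fintype F] (r m : ℕ) (hr : 1 ≤ r) (hrm : r ≤ m) :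
    ∃ C : Finset ((Fin r → F) →ₗ[F] (Fin m → F)),
      C.card = Fintype.card F ^ m ∧
      ∀ f ∈ C, ∀ g ∈ C, f ≠ g → Function.Injective ⇑(f - g) := by
  classical
  obtain ⟨L, _, _, _, hrank, hcard⟩ := exists_finite_ext F m (by omega)
  haveI : Module.Finite F L := Module.Finite.of_finite
  let b : Basis (Fin m) F L := (Module.finBasis F L).reindex (finCongr hrank)
  let e : L ≃ₗ[F] (Fin m → F) := b.equivFun
  -- extension by zero
  let j : (Fin r → F) →ₗ[F] (Fin m → F) :=
    LinearMap.pi fun i => if h : (i : ℕ) < r then LinearMap.proj (⟨i, h⟩ : Fin r) else 0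
  have hj : Function.Injective ⇑j := by
    intro x y hxy
    funext i
    have := congrFun hxy ⟨(i : ℕ), lt_of_lt_of_le i.2 hrm⟩
    simpa [j, LinearMap.pi_apply, i.2] using this
  let ι : (Fin r → F) →ₗ[F] L := e.symm.toLinearMap.comp j
  have hι : Function.Injective ⇑ι := e.symm.injective.comp hj
  let fA : L → ((Fin r → F) →ₗ[F] (Fin m → F)) := fun a =>
    e.toLinearMap.comp ((LinearMap.mulLeft F a).comp ι)
  -- key computation
  have hsub : ∀ (a c : L) (x : Fin r → F), (fA a - fA c) x = e ((a - c) * ι x) := by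
    intro a c x
    simp [fA, sub_mul]
  -- a nonzero vector in the domain
  have hx0 : ∃ x : Fin r → F, ι x ≠ 0 := by
    refine ⟨fun _ => 1, fun h => ?_⟩
    have : (fun _ => (1 : F)) = (0 : Fin r → F) := hι (by simpa using h)
    have := congrFun this ⟨0, hr⟩
    simp at this
  obtain ⟨x0, hx0⟩ := hx0
  have hfA_inj : Function.Injective fA := by
    intro a c h
    have h2 : (fA a - fA c) x0 = 0 := by rw [h]; simp
    rw [hsub] at h2
    have h3 : (a - c) * ι x0 = 0 := e.map_eq_zero_iff.mp h2
    rcases mul_eq_zero.mp h3 with h4 | h4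
    · exact sub_eq_zero.mp h4
    · exact absurd h4 hx0
  refine ⟨Finset.univ.image fA, ?_, ?_⟩
  · rw [Finset.card_image_of_injective _ hfA_inj, Finset.card_univ, hcard]
  · intro f hf g hg hfg
    obtain ⟨a, -, rfl⟩ := Finset.mem_image.mp hf
    obtain ⟨c, -, rfl⟩ := Finset.mem_image.mp hg
    have hac : a ≠ c := fun h => hfg (by rw [h])
    intro x y hxy
    have h1 : (fA a - fA c) (x - y) = 0 := by rw [map_sub, hxy, sub_self]
    rw [hsub] at h1
    have h3 : (a - c) * ι (x - y) = 0 := e.map_eq_zero_iff.mp h1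
    rcases mul_eq_zero.mp h3 with h4 | h4
    · exact absurd (sub_eq_zero.mp h4) hac
    · have : ι (x - y) = ι 0 := by simpa using h4
      have := hι this
      exact sub_eq_zero.mp this


section Graph
variable {R M M₂ : Type*} [Ring R] [AddCommGroup M] [AddCommGroup M₂] [Module R M] [Module R M₂]

lemma graph_eq_range (f : M →ₗ[R] M₂) :
    f.graph = LinearMap.range (LinearMap.prod LinearMap.id f) := by
  ext ⟨x, y⟩
  simp only [LinearMap.mem_graph_iff, LinearMap.mem_range, LinearMap.prod_apply, Function.prod,
    LinearMap.id_apply, Prod.mk.injEq]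
  constructor
  · rintro h; exact ⟨x, rfl, h.symm⟩
  · rintro ⟨z, rfl, h⟩; exact h.symm

lemma finrank_graph (f : M →ₗ[R] M₂) : finrank R f.graph = finrank R M := by
  rw [graph_eq_range]
  exact LinearMap.finrank_range_of_inj (fun x y h => congrArg Prod.fst h)

lemma graph_inf_graph {f g : M →ₗ[R] M₂} (h : Function.Injective ⇑(f - g)) :
    f.graph ⊓ g.graph = ⊥ := by
  rw [eq_bot_iff]
  rintro ⟨x, y⟩ ⟨h1, h2⟩
  rw [SetLike.mem_coe, LinearMap.mem_graph_iff] at h1 h2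
  have hx : x = 0 := by
    have : (f - g) x = (f - g) 0 := by simp [LinearMap.sub_apply, ← h1, ← h2]
    exact h this
  subst hx
  simp only [map_zero] at h1
  simp [Submodule.mem_bot, Prod.ext_iff, h1]

lemma graph_inf_inr (f : M →ₗ[R] M₂) (W : Submodule R M₂) :
    f.graph ⊓ W.map (LinearMap.inr R M M₂) = ⊥ := by
  rw [eq_bot_iff]
  rintro ⟨x, y⟩ ⟨h1, h2⟩
  rw [SetLike.mem_coe, LinearMap.mem_graph_iff] at h1
  obtain ⟨w, -, hw⟩ := h2
  simp only [LinearMap.inr_apply, Prod.ext_iff] at hw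
  have hx : x = 0 := hw.1.symm
  subst hx
  simp only [map_zero] at h1
  simp [Submodule.mem_bot, Prod.ext_iff, h1]

lemma graph_injective : Function.Injective (LinearMap.graph : (M →ₗ[R] M₂) → _) := by
  intro f g h
  ext x
  have : (x, f x) ∈ g.graph := h ▸ (LinearMap.mem_graph_iff f (x, f x)).mpr rfl
  exact (LinearMap.mem_graph_iff g _).mp this

lemma graph_ne_inr [Nontrivial M] (f : M →ₗ[R] M₂) (W : Submodule R M₂) :
    f.graph ≠ W.map (LinearMap.inr R M M₂) := by
  intro h
  obtain ⟨x, hx⟩ := exists_ne (0 : M)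
  have : (x, f x) ∈ W.map (LinearMap.inr R M M₂) := h ▸ (LinearMap.mem_graph_iff f _).mpr rfl
  obtain ⟨w, -, hw⟩ := this
  exact hx ((Prod.ext_iff.mp hw).1.symm)
end Graph

universe uF

lemma spread_aux (F : Type uF) [Field F] [Fintype F] (q r z : ℕ) (hq : Fintype.card F = q)
    (hr : 1 ≤ r) (hzr : z < r) :
    ∀ (k : ℕ) (V : Type uF) (_ : AddCommGroup V) (_ : Module F V) (_ : FiniteDimensional F V),
      Module.finrank F V = (k + 1) * r + z →
      ∃ S : Finset (Submodule F V),
        (∀ W ∈ S, Module.finrank F W = r) ∧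
        (∀ W ∈ S, ∀ W' ∈ S, W ≠ W' → W ⊓ W' = ⊥) ∧
        S.card * (q ^ r - 1) + q ^ (r + z) = q ^ ((k + 1) * r + z) + q ^ r - 1 := by
  classical
  have hq0 : 0 < q := hq ▸ Fintype.card_pos
  have hqr1 : 1 ≤ q ^ r := Nat.one_le_pow _ _ hq0
  intro k
  induction k with
  | zero =>
    intro V _ _ _ hV
    obtain ⟨f, hf⟩ := exists_linearIndependent_of_le_finrank
      (R := F) (M := V) (n := r) (by omega)
    refine ⟨{Submodule.span F (Set.range f)}, ?_, ?_, ?_⟩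
    · intro W hW
      rw [Finset.mem_singleton] at hW
      subst hW
      rw [finrank_span_eq_card hf, Fintype.card_fin]
    · intro W hW W' hW' hne
      rw [Finset.mem_singleton] at hW hW'
      exact absurd (hW.trans hW'.symm) hne
    · have he : (0 + 1) * r + z = r + z := by ring
      rw [he, Finset.card_singleton]
      omega
  | succ k ih =>
    intro V _ _ _ hV
    set m := (k + 1) * r + z with hm_def
    have hrm : r ≤ m := by
      have h1 : 1 * r ≤ (k + 1) * r := Nat.mul_le_mul_right r (by omega)
      omega
    have hVrm : finrank F V = r + m := by rw [hV]; ring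
    -- the linear equivalence V ≃ (Fin r → F) × (Fin m → F)
    let b : Basis (Fin (r + m)) F V := (Module.finBasis F V).reindex (finCongr hVrm)
    let e : V ≃ₗ[F] (Fin r → F) × (Fin m → F) :=
      b.equivFun.trans ((LinearEquiv.funCongrLeft F F finSumFinEquiv).trans
        (LinearEquiv.sumArrowLequivProdArrow (Fin r) (Fin m) F F))
    obtain ⟨C, hCcard, hCinj⟩ := exists_mrd F r m hr hrm
    obtain ⟨S', hS'rank, hS'inf, hS'card⟩ := ih (Fin m → F) inferInstance inferInstance
      inferInstance (finrank_fin_fun F)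
    haveI : Nonempty (Fin r) := ⟨⟨0, hr⟩⟩
    set inr := LinearMap.inr F (Fin r → F) (Fin m → F) with hinr_def
    set T : Finset (Submodule F ((Fin r → F) × (Fin m → F))) :=
      C.image LinearMap.graph ∪ S'.image (Submodule.map inr) with hT_def
    -- properties on T
    have hTrank : ∀ W ∈ T, finrank F W = r := by
      intro W hW
      rcases Finset.mem_union.mp hW with h | h
      · obtain ⟨f, -, rfl⟩ := Finset.mem_image.mp h
        rw [finrank_graph, finrank_fin_fun]
      · obtain ⟨W', hW', rfl⟩ := Finset.mem_image.mp h
        rw [← (Submodule.equivMapOfInjective inr LinearMap.inr_injective W').finrank_eq]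
        exact hS'rank W' hW'
    have hTinf : ∀ W ∈ T, ∀ W' ∈ T, W ≠ W' → W ⊓ W' = ⊥ := by
      intro W hW W' hW' hne
      rcases Finset.mem_union.mp hW with h | h <;> rcases Finset.mem_union.mp hW' with h' | h'
      · obtain ⟨f, hf, rfl⟩ := Finset.mem_image.mp h
        obtain ⟨g, hg, rfl⟩ := Finset.mem_image.mp h'
        exact graph_inf_graph (hCinj f hf g hg (fun hfg => hne (by rw [hfg])))
      · obtain ⟨f, hf, rfl⟩ := Finset.mem_image.mp h
        obtain ⟨W'', -, rfl⟩ := Finset.mem_image.mp h'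
        exact graph_inf_inr f W''
      · obtain ⟨W'', -, rfl⟩ := Finset.mem_image.mp h
        obtain ⟨f, hf, rfl⟩ := Finset.mem_image.mp h'
        rw [inf_comm]
        exact graph_inf_inr f W''
      · obtain ⟨W1, hW1, rfl⟩ := Finset.mem_image.mp h
        obtain ⟨W2, hW2, rfl⟩ := Finset.mem_image.mp h'
        have h12 : W1 ≠ W2 := fun hh => hne (by rw [hh])
        rw [← Submodule.map_inf inr LinearMap.inr_injective, hS'inf W1 hW1 W2 hW2 h12,
          Submodule.map_bot]
    have hTcard : T.card = q ^ m + S'.card := by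
      rw [hT_def, Finset.card_union_of_disjoint, Finset.card_image_of_injective _ graph_injective,
        Finset.card_image_of_injective _ (Submodule.map_injective_of_injective
          (f := inr) LinearMap.inr_injective), hCcard, hq]
      · rw [Finset.disjoint_left]
        rintro A hA hA'
        obtain ⟨f, -, rfl⟩ := Finset.mem_image.mp hA
        obtain ⟨W', -, hW'⟩ := Finset.mem_image.mp hA'
        exact graph_ne_inr f W' hW'.symm
    -- transport along e.symm
    refine ⟨T.image (Submodule.map (e.symm : (Fin r → F) × (Fin m → F) →ₗ[F] V)), ?_, ?_, ?_⟩
    · intro W hW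
      obtain ⟨W', hW', rfl⟩ := Finset.mem_image.mp hW
      rw [LinearEquiv.finrank_map_eq]
      exact hTrank W' hW'
    · intro W hW W' hW' hne
      obtain ⟨W1, hW1, rfl⟩ := Finset.mem_image.mp hW
      obtain ⟨W2, hW2, rfl⟩ := Finset.mem_image.mp hW'
      have h12 : W1 ≠ W2 := fun hh => hne (by rw [hh])
      rw [← Submodule.map_inf (e.symm : (Fin r → F) × (Fin m → F) →ₗ[F] V) e.symm.injective, hTinf W1 hW1 W2 hW2 h12, Submodule.map_bot]
    · rw [Finset.card_image_of_injective _
        (Submodule.map_injective_of_injective (f := (e.symm : (Fin r → F) × (Fin m → F) →ₗ[F] V))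
          e.symm.injective), hTcard]
      have he2 : (k + 1 + 1) * r + z = m + r := by rw [hm_def]; ring
      rw [he2]
      have hqm1 : 1 ≤ q ^ m := Nat.one_le_pow _ _ hq0
      have hpow : q ^ m * q ^ r = q ^ (m + r) := (pow_add q m r).symm
      have h2 : 1 ≤ q ^ (m + r) + q ^ r := by omega
      have h3 : 1 ≤ q ^ m + q ^ r := by omega
      zify [hqr1, h2, h3] at hS'card ⊢
      have hpow' : (q : ℤ) ^ m * (q : ℤ) ^ r = (q : ℤ) ^ (m + r) := by
        rw [← pow_add]
      linear_combination hS'card + hpow'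


/-- Let `u ≡ z (mod r)` with `0 ≤ z < r`. Then there exists a partial `r`-spread of
`F_q^u` of size at least `(q^u - q^r(q^z - 1) - 1)/(q^r - 1)`. -/
theorem exists_partial_spread (F : Type*) [Field F] [Fintype F] (q r u z : ℕ)
    (hq : Fintype.card F = q) (hr : 1 ≤ r) (hu : r < u) (hz : z = u % r) :
    ∃ S : Finset (Submodule F (Fin u → F)),
      (∀ W ∈ S, Module.finrank F W = r) ∧
      (∀ W ∈ S, ∀ W' ∈ S, W ≠ W' → W ⊓ W' = ⊥) ∧
      q ^ u - q ^ r * (q ^ z - 1) - 1 ≤ S.card * (q ^ r - 1) := by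
  classical
  have hq0 : 0 < q := hq ▸ Fintype.card_pos
  have hzr : z < r := hz ▸ Nat.mod_lt u (by omega)
  have hdiv := Nat.div_add_mod u r
  have hd1 : 1 ≤ u / r := (Nat.one_le_div_iff (by omega)).mpr hu.le
  obtain ⟨k, hk⟩ : ∃ k, u / r = k + 1 := ⟨u / r - 1, by omega⟩
  have hu' : (k + 1) * r + z = u := by
    have h := hdiv
    rw [hk] at h
    have hc : (k + 1) * r = r * (k + 1) := Nat.mul_comm _ _
    omega
  obtain ⟨S, h1, h2, h3⟩ := spread_aux F q r z hq hr hzr k (Fin u → F) inferInstance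
    inferInstance inferInstance (by rw [Module.finrank_fin_fun, hu'])
  refine ⟨S, h1, h2, ?_⟩
  rw [hu'] at h3
  have hle : r ≤ (k + 1) * r := by
    have := Nat.mul_le_mul_right r (show 1 ≤ k + 1 by omega)
    omega
  have hrzu : r + z ≤ u := by omega
  have hpow1 : q ^ r * (q ^ z - 1) = q ^ (r + z) - q ^ r := by
    rw [Nat.mul_sub, mul_one, ← pow_add]
  have hq1 : 1 ≤ q ^ r := Nat.one_le_pow _ _ hq0
  have hq2 : q ^ (r + z) ≤ q ^ u := Nat.pow_le_pow_right hq0 hrzu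
  have hq3 : q ^ r ≤ q ^ (r + z) := Nat.pow_le_pow_right hq0 (by omega)
  rw [hpow1]
  omega
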